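/- arXiv:1302.4239 — 2 statements merged into one kernel-verified Lean document; each statement's English description precedes it below -/
import Mathlib

section
/- Define p_1(n,3,x,s) by the recurrence p_1(n+3) = x·p_1(n+2) - s·p_1(n) with p_1(0)=3, p_1(1)=x, p_1(2)=x^2, p_1(3)=x^3-3s. Then p_1(n,3,x+1,x) = 1 + L_n(x,x), where L_n is the Lucas polynomial. -/
/-- The bivariate Lucas polynomials: `L 0 = 2`, `L 1 = x`,
`L (n+2) = x * L (n+1) + s * L n`. -/
def lucas {R : Type*} [CommRing R] (x s : R) : ℕ → R
  | 0 => 2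
  | 1 => x
  | (n + 2) => x * lucas x s (n + 1) + s * lucas x s n

/-- The polynomials `p₁(n,3,x,s)`: `p₁(0)=3`, `p₁(1)=x`, `p₁(2)=x²`,
and `p₁(n+3) = x·p₁(n+2) - s·p₁(n)` (so in particular `p₁(3)=x³-3s`). -/
def p1three {R : Type*} [CommRing R] (x s : R) : ℕ → R
  | 0 => 3
  | 1 => x
  | 2 => x ^ 2
  | (n + 3) => x * p1three x s (n + 2) - s * p1three x s n

theorem stmt_8 {R : Type*} [CommRing R] (n : ℕ) (x : R) :
    p1three (x + 1) x n = 1 + lucas x x n := by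
  induction n using Nat.strong_induction_on with
  | _ n ih =>
    match n with
    | 0 => norm_num [p1three, lucas]
    | 1 => simp [p1three, lucas]; ring
    | 2 => simp [p1three, lucas]; ring
    | (n + 3) =>
      rw [p1three, ih (n + 2) (by omega), ih n (by omega)]
      simp only [lucas]
      ring
end

section
/- Define p̃_1(n,3,x,s) = p_1(n,3,x,s) for n ≥ 1 (via the recurrence p_1(n+3) = x·p_1(n+2) - s·p_1(n), p_1(1)=x, p_1(2)=x^2, p_1(3)=x^3-3s) and p̃_1(0,3,x,s) = 1. Then ∑_{k=0}^{⌊n/3⌋} C(n,k) · p̃_1(n-3k,3,x,s) · s^k = x^n for all n ≥ 0. -/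
def ptilde1three {R : Type*} [CommRing R] (x s : R) (n : ℕ) : R :=
  if n = 0 then 1 else p1three x s n

lemma ptilde_rec {R : Type*} [CommRing R] (x s : R) (m : ℕ) :
    x * ptilde1three x s (m+3) = ptilde1three x s (m+4) + s * ptilde1three x s (m+1) := by
  have h : p1three x s (m+4) = x * p1three x s (m+3) - s * p1three x s (m+1) := rfl
  simp only [ptilde1three, if_neg (by omega : ¬ m+3 = 0), if_neg (by omega : ¬ m+4 = 0),
    if_neg (by omega : ¬ m+1 = 0), h]
  ring

lemma ptilde_zero {R : Type*} [CommRing R] (x s : R) : ptilde1three x s 0 = 1 := rfl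
lemma ptilde_one {R : Type*} [CommRing R] (x s : R) : ptilde1three x s 1 = x := rfl
lemma ptilde_two {R : Type*} [CommRing R] (x s : R) : ptilde1three x s 2 = x^2 := rfl
lemma ptilde_three {R : Type*} [CommRing R] (x s : R) :
    ptilde1three x s 3 = x * x^2 - s * 3 := rfl

lemma choose_eq (q : ℕ) : (3*q+2).choose (q+1) = 2 * (3*q+2).choose q := by
  have h := Nat.choose_succ_right_eq (3*q+2) q
  rw [show 3*q+2 - q = 2*(q+1) by omega] at h
  have h2 : (2 * (3*q+2).choose q) * (q+1) = (3*q+2).choose q * (2*(q+1)) := by ring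
  exact Nat.eq_of_mul_eq_mul_right (Nat.succ_pos q) (h.trans h2.symm)

lemma key {R : Type*} [CommRing R] (x s : R) (n : ℕ) :
    ∑ k ∈ Finset.range ((n+1)/3 + 1),
      (Nat.choose (n+1) k : R) * ptilde1three x s (n+1 - 3*k) * s^k
    = x * ∑ k ∈ Finset.range (n/3 + 1),
      (Nat.choose n k : R) * ptilde1three x s (n - 3*k) * s^k := by
  set A : ℕ → R := fun k => (Nat.choose n k : R) * ptilde1three x s (n+1 - 3*k) * s^k with hA
  set B : ℕ → R := fun k =>
    (Nat.choose n k : R) * ptilde1three x s (n+1 - 3*(k+1)) * s^(k+1) with hB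
  have L1 : ∀ N, ∑ k ∈ Finset.range (N+1),
      (Nat.choose (n+1) k : R) * ptilde1three x s (n+1 - 3*k) * s^k
      = ∑ k ∈ Finset.range (N+1), A k + ∑ k ∈ Finset.range N, B k := by
    intro N
    rw [Finset.sum_range_succ']
    have hterm : ∀ i ∈ Finset.range N,
        (Nat.choose (n+1) (i+1) : R) * ptilde1three x s (n+1 - 3*(i+1)) * s^(i+1)
        = A (i+1) + B i := by
      intro i _
      simp only [hA, hB, Nat.choose_succ_succ, Nat.cast_add]
      ring
    rw [Finset.sum_congr rfl hterm, Finset.sum_add_distrib]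
    have h0 : (Nat.choose (n+1) 0 : R) * ptilde1three x s (n+1 - 3*0) * s^0 = A 0 := by
      simp [hA]
    rw [h0, Finset.sum_range_succ' A N]
    ring
  obtain ⟨q, hq⟩ : ∃ q, n = 3*q ∨ n = 3*q+1 ∨ n = 3*q+2 := ⟨n/3, by omega⟩
  have hstep : ∀ k ∈ Finset.range (n/3),
      x * ((Nat.choose n k : R) * ptilde1three x s (n - 3*k) * s^k) = A k + B k := by
    intro k hk
    have hk' : k < n/3 := Finset.mem_range.mp hk
    have hm : ∃ m, n - 3*k = m + 3 ∧ n+1 - 3*k = m + 4 ∧ n+1 - 3*(k+1) = m + 1 :=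
      ⟨n - 3*k - 3, by omega, by omega, by omega⟩
    obtain ⟨m, e1, e2, e3⟩ := hm
    simp only [hA, hB, e1, e2, e3]
    linear_combination ((Nat.choose n k : R) * s^k) * ptilde_rec x s m
  rcases hq with h | h | h
  · -- n = 3q
    have R1 : x * ∑ k ∈ Finset.range (n/3 + 1),
        (Nat.choose n k : R) * ptilde1three x s (n - 3*k) * s^k
        = ∑ k ∈ Finset.range (n/3 + 1), A k + ∑ k ∈ Finset.range (n/3), B k := by
      have hlast : x * ((Nat.choose n (n/3) : R) * ptilde1three x s (n - 3*(n/3)) * s^(n/3))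
          = A (n/3) := by
        simp only [hA, show n - 3*(n/3) = 0 by omega, show n+1 - 3*(n/3) = 1 by omega,
          ptilde_zero, ptilde_one]
        ring
      rw [Finset.mul_sum, Finset.sum_range_succ, Finset.sum_congr rfl hstep,
        Finset.sum_add_distrib, hlast, Finset.sum_range_succ A (n/3)]
      ring
    rw [show (n+1)/3 = n/3 by omega, L1 (n/3), R1]
  · -- n = 3q+1
    have R1 : x * ∑ k ∈ Finset.range (n/3 + 1),
        (Nat.choose n k : R) * ptilde1three x s (n - 3*k) * s^k
        = ∑ k ∈ Finset.range (n/3 + 1), A k + ∑ k ∈ Finset.range (n/3), B k := by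
      have hlast : x * ((Nat.choose n (n/3) : R) * ptilde1three x s (n - 3*(n/3)) * s^(n/3))
          = A (n/3) := by
        simp only [hA, show n - 3*(n/3) = 1 by omega, show n+1 - 3*(n/3) = 2 by omega,
          ptilde_one, ptilde_two]
        ring
      rw [Finset.mul_sum, Finset.sum_range_succ, Finset.sum_congr rfl hstep,
        Finset.sum_add_distrib, hlast, Finset.sum_range_succ A (n/3)]
      ring
    rw [show (n+1)/3 = n/3 by omega, L1 (n/3), R1]
  · -- n = 3q+2
    have R1 : x * ∑ k ∈ Finset.range (n/3 + 1),
        (Nat.choose n k : R) * ptilde1three x s (n - 3*k) * s^k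
        = ∑ k ∈ Finset.range (n/3 + 1), A k + ∑ k ∈ Finset.range (n/3), B k
            + 3 * B (n/3) := by
      have hlast : x * ((Nat.choose n (n/3) : R) * ptilde1three x s (n - 3*(n/3)) * s^(n/3))
          = A (n/3) + 3 * B (n/3) := by
        simp only [hA, hB, show n - 3*(n/3) = 2 by omega, show n+1 - 3*(n/3) = 3 by omega,
          show n+1 - 3*(n/3+1) = 0 by omega, ptilde_two, ptilde_three, ptilde_zero]
        ring
      rw [Finset.mul_sum, Finset.sum_range_succ, Finset.sum_congr rfl hstep,
        Finset.sum_add_distrib, hlast, Finset.sum_range_succ A (n/3)]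
      ring
    have hAq1 : A (n/3 + 1) = 2 * B (n/3) := by
      simp only [hA, hB, show n+1 - 3*(n/3+1) = 0 by omega, ptilde_zero]
      have hc : Nat.choose n (n/3+1) = 2 * Nat.choose n (n/3) := by
        rw [h, show (3*q+2)/3 = q by omega, choose_eq q]
      rw [hc]
      push_cast
      ring
    rw [show (n+1)/3 = n/3 + 1 by omega, L1 (n/3 + 1), R1,
      Finset.sum_range_succ A (n/3 + 1), Finset.sum_range_succ B (n/3), hAq1]
    ring

theorem stmt_9 {R : Type*} [CommRing R] (n : ℕ) (x s : R) :
    ∑ k ∈ Finset.range (n / 3 + 1),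
      (Nat.choose n k : R) * ptilde1three x s (n - 3 * k) * s ^ k = x ^ n := by
  induction n with
  | zero => simp [ptilde1three]
  | succ n ih => rw [key x s n, ih, pow_succ]; ring
end
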